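/- arXiv:1712.05104 — 3 statements merged into one kernel-verified Lean document; each statement's English description precedes it below -/
import Mathlib

section
/- Let m, n ∈ ℕ, m, n ≥ 1, and let F : ℝⁿ → ℂ^{m×m} be bounded and continuous with every entry function F_{j,k} : ℝⁿ → ℂ, 1 ≤ j,k ≤ m, positive semidefinite. Then for every t ≥ 0 and all 1 ≤ j,k ≤ m, the function x ↦ (exp(t F(x)))_{j,k}, where exp denotes the matrix exponential, is positive semidefinite. -/
open MeasureTheory Complex
open scoped ComplexOrder ENNReal

noncomputable section

/-- A function `F : ℝⁿ → ℂ` is positive semidefinite if for every `N ∈ ℕ` and all points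
`x₁, …, x_N ∈ ℝⁿ`, the `N × N` complex matrix `(F (x p - x q))_{p,q}` is positive
semidefinite. -/
def IsPosSemidefFun {n : ℕ} (F : (Fin n → ℝ) → ℂ) : Prop :=
  ∀ (N : ℕ) (x : Fin N → (Fin n → ℝ)),
    Matrix.PosSemidef (Matrix.of fun p q => F (x p - x q))

/-- A function `F : ℝⁿ → ℂ` is conditionally positive semidefinite if for every `N ∈ ℕ` and
all points `x₁, …, x_N ∈ ℝⁿ`, the matrix `(F (x p - x q))_{p,q}` is Hermitian and
`∑ p q, conj (c p) * F (x p - x q) * c q ≥ 0` for all `c : ℂᴺ` with `∑ p, c p = 0`. -/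
def IsCondPosSemidefFun {n : ℕ} (F : (Fin n → ℝ) → ℂ) : Prop :=
  ∀ (N : ℕ) (x : Fin N → (Fin n → ℝ)),
    (Matrix.of fun p q => F (x p - x q)).IsHermitian ∧
      ∀ c : Fin N → ℂ, (∑ p, c p) = 0 →
        0 ≤ ∑ p, ∑ q, (starRingEnd ℂ) (c p) * F (x p - x q) * c q

/-- The Fourier transform `f^∧(y) = (2π)^{-n/2} ∫_{ℝⁿ} e^{-i y·x} f(x) dⁿx`. -/
def fourierT {n : ℕ} (f : (Fin n → ℝ) → ℂ) (y : Fin n → ℝ) : ℂ :=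
  (((2 * Real.pi) ^ (-(n : ℝ) / 2) : ℝ) : ℂ) *
    ∫ x : Fin n → ℝ, Complex.exp (-Complex.I * (∑ i, y i * x i)) * f x

open scoped MatrixOrder in
lemma IsPosSemidefFun.mul {n : ℕ} {f g : (Fin n → ℝ) → ℂ}
    (hf : IsPosSemidefFun f) (hg : IsPosSemidefFun g) :
    IsPosSemidefFun fun x => f x * g x := by
  intro N x
  obtain ⟨B, hB⟩ := CStarAlgebra.nonneg_iff_eq_star_mul_self.mp (hf N x).nonneg
  obtain ⟨C, hC⟩ := CStarAlgebra.nonneg_iff_eq_star_mul_self.mp (hg N x).nonneg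
  rw [Matrix.star_eq_conjTranspose] at hB hC
  set D : Matrix (Fin N × Fin N) (Fin N) ℂ :=
      Matrix.of fun ir p => B ir.1 p * C ir.2 p with hD
  have key : (Matrix.of fun p q => f (x p - x q) * g (x p - x q)) =
      D.conjTranspose * D := by
    ext p q
    have hfpq : f (x p - x q) = (B.conjTranspose * B) p q := by rw [← hB]; rfl
    have hgpq : g (x p - x q) = (C.conjTranspose * C) p q := by rw [← hC]; rfl
    simp only [Matrix.of_apply]
    rw [hfpq, hgpq]
    simp only [Matrix.mul_apply, Matrix.conjTranspose_apply, Matrix.of_apply, hD]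
    rw [Finset.sum_mul_sum, ← Finset.sum_product']
    rw [show ((Finset.univ : Finset (Fin N)) ×ˢ (Finset.univ : Finset (Fin N)))
      = (Finset.univ : Finset (Fin N × Fin N)) from (Finset.univ_product_univ)]
    refine Finset.sum_congr rfl fun ir _ => ?_
    simp [star_mul']
    ring
  rw [key]
  exact Matrix.posSemidef_conjTranspose_mul_self _

lemma isPosSemidefFun_const_one {n : ℕ} :
    IsPosSemidefFun (fun _ : Fin n → ℝ => (1 : ℂ)) := by
  intro N x
  have key : (Matrix.of fun (_ _ : Fin N) => (1 : ℂ)) =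
      (Matrix.of fun (_ : Fin 1) (_ : Fin N) => (1 : ℂ)).conjTranspose *
      (Matrix.of fun (_ : Fin 1) (_ : Fin N) => (1 : ℂ)) := by
    ext p q
    simp [Matrix.mul_apply]
  exact key ▸ Matrix.posSemidef_conjTranspose_mul_self _

lemma isPosSemidefFun_const_zero {n : ℕ} :
    IsPosSemidefFun (fun _ : Fin n → ℝ => (0 : ℂ)) := by
  intro N x
  have key : (Matrix.of fun (_ _ : Fin N) => (0 : ℂ)) = (0 : Matrix (Fin N) (Fin N) ℂ) := by
    ext p q; rfl
  rw [key]
  exact Matrix.PosSemidef.zero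

lemma IsPosSemidefFun.add' {n : ℕ} {f g : (Fin n → ℝ) → ℂ}
    (hf : IsPosSemidefFun f) (hg : IsPosSemidefFun g) :
    IsPosSemidefFun fun x => f x + g x := by
  intro N x
  have key : (Matrix.of fun p q => f (x p - x q) + g (x p - x q)) =
      (Matrix.of fun p q => f (x p - x q)) + (Matrix.of fun p q => g (x p - x q)) := by
    ext p q; rfl
  exact key ▸ (hf N x).add (hg N x)

lemma isPosSemidefFun_sum {n : ℕ} {ι : Type*} (s : Finset ι)
    (f : ι → (Fin n → ℝ) → ℂ) (h : ∀ i ∈ s, IsPosSemidefFun (f i)) :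
    IsPosSemidefFun fun x => ∑ i ∈ s, f i x := by
  classical
  induction s using Finset.cons_induction with
  | empty => simpa using isPosSemidefFun_const_zero
  | cons a s ha ih =>
      simp only [Finset.sum_cons]
      exact (h a (Finset.mem_cons_self a s)).add'
        (ih fun i hi => h i (Finset.mem_cons_of_mem hi))

lemma IsPosSemidefFun.real_smul {n : ℕ} {f : (Fin n → ℝ) → ℂ} {r : ℝ}
    (hr : 0 ≤ r) (hf : IsPosSemidefFun f) :
    IsPosSemidefFun fun x => (r : ℂ) * f x := by
  intro N x
  have key : (Matrix.of fun p q => (r : ℂ) * f (x p - x q)) =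
      (r : ℂ) • (Matrix.of fun p q => f (x p - x q)) := by
    ext p q; rfl
  rw [key]
  refine Matrix.posSemidef_iff_dotProduct_mulVec.mpr ⟨?_, ?_⟩
  · have h1 := (hf N x).1
    rw [Matrix.IsHermitian, Matrix.conjTranspose_smul, h1]
    congr 1
    simp
  · intro c
    have h2 := (hf N x).dotProduct_mulVec_nonneg c
    rw [Matrix.smul_mulVec, dotProduct_smul, smul_eq_mul]
    exact mul_nonneg (by exact_mod_cast hr) h2

lemma pow_entry_psd {m n : ℕ} (F : (Fin n → ℝ) → Matrix (Fin m) (Fin m) ℂ)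
    (h : ∀ j k, IsPosSemidefFun fun x => F x j k) :
    ∀ (ℓ : ℕ) (j k : Fin m), IsPosSemidefFun fun x => (F x ^ ℓ) j k := by
  intro ℓ
  induction ℓ with
  | zero =>
      intro j k
      by_cases hjk : j = k
      · subst hjk
        simpa [Matrix.one_apply] using (isPosSemidefFun_const_one (n := n))
      · simpa [Matrix.one_apply, hjk] using (isPosSemidefFun_const_zero (n := n))
  | succ ℓ ih =>
      intro j k
      have : (fun x => (F x ^ (ℓ + 1)) j k) = fun x => ∑ i, (F x ^ ℓ) j i * F x i k := by
        funext x
        rw [pow_succ, Matrix.mul_apply]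
      rw [this]
      exact isPosSemidefFun_sum Finset.univ _ fun i _ => (ih j i).mul (h i k)

lemma quad_eq {N : ℕ} (M : Matrix (Fin N) (Fin N) ℂ) (c : Fin N → ℂ) :
    dotProduct (star c) (M.mulVec c) = ∑ p, ∑ q, star (c p) * (M p q * c q) := by
  simp [dotProduct, Matrix.mulVec, Finset.mul_sum]

lemma isPosSemidefFun_tsum {n : ℕ} (f : ℕ → (Fin n → ℝ) → ℂ)
    (h : ∀ ℓ, IsPosSemidefFun (f ℓ)) (hs : ∀ y, Summable fun ℓ => f ℓ y) :
    IsPosSemidefFun fun y => ∑' ℓ, f ℓ y := by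
  intro N x
  refine Matrix.posSemidef_iff_dotProduct_mulVec.mpr ⟨?_, ?_⟩
  · ext p q
    simp only [Matrix.conjTranspose_apply, Matrix.of_apply]
    rw [tsum_star]
    exact tsum_congr fun ℓ => by simpa using ((h ℓ N x).1.apply p q)
  · intro c
    have key : ∀ p q : Fin N, HasSum (fun ℓ => star (c p) * (f ℓ (x p - x q) * c q))
        (star (c p) * ((∑' ℓ, f ℓ (x p - x q)) * c q)) := fun p q =>
      (((hs (x p - x q)).hasSum.mul_right (c q)).mul_left (star (c p)))
    have key2 : HasSum (fun ℓ => ∑ p, ∑ q, star (c p) * (f ℓ (x p - x q) * c q))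
        (∑ p, ∑ q, star (c p) * ((∑' ℓ, f ℓ (x p - x q)) * c q)) :=
      hasSum_sum fun p _ => hasSum_sum fun q _ => key p q
    rw [quad_eq]
    refine hasSum_le (fun ℓ => ?_) hasSum_zero key2
    have := (h ℓ N x).dotProduct_mulVec_nonneg c
    rw [quad_eq] at this
    simpa using this

lemma matrix_exp_entry {m : ℕ} (A : Matrix (Fin m) (Fin m) ℂ) (j k : Fin m) :
    ((NormedSpace.exp A) j k = ∑' ℓ : ℕ, ((ℓ.factorial : ℂ)⁻¹ • A ^ ℓ) j k) ∧
    Summable fun ℓ : ℕ => ((ℓ.factorial : ℂ)⁻¹ • A ^ ℓ) j k := by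
  letI : NormedRing (Matrix (Fin m) (Fin m) ℂ) := Matrix.linftyOpNormedRing
  letI : NormedAlgebra ℂ (Matrix (Fin m) (Fin m) ℂ) := Matrix.linftyOpNormedAlgebra
  have hsum : Summable fun ℓ : ℕ => (ℓ.factorial : ℂ)⁻¹ • A ^ ℓ :=
    NormedSpace.expSeries_summable' (𝕂 := ℂ) A
  have hrow : ∀ p, Summable fun ℓ : ℕ => ((ℓ.factorial : ℂ)⁻¹ • A ^ ℓ) p := by
    intro p
    exact Pi.summable.mp hsum p
  have hentry : Summable fun ℓ : ℕ => ((ℓ.factorial : ℂ)⁻¹ • A ^ ℓ) j k :=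
    Pi.summable.mp (hrow j) k
  refine ⟨?_, hentry⟩
  have h1 : NormedSpace.exp A = ∑' ℓ : ℕ, (ℓ.factorial : ℂ)⁻¹ • A ^ ℓ :=
    congrFun (NormedSpace.exp_eq_tsum (𝕂 := ℂ)) A
  rw [h1]
  exact (Pi.hasSum.mp (Pi.hasSum.mp hsum.hasSum j) k).tsum_eq.symm

theorem stmt11 {m n : ℕ} (hm : 1 ≤ m) (hn : 1 ≤ n)
    (F : (Fin n → ℝ) → Matrix (Fin m) (Fin m) ℂ)
    (hFbd : ∃ C : ℝ, ∀ x j k, ‖F x j k‖ ≤ C)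
    (hFcont : ∀ j k, Continuous fun x => F x j k)
    (hpsd : ∀ j k, IsPosSemidefFun fun x => F x j k) :
    ∀ t : ℝ, 0 ≤ t → ∀ j k : Fin m,
      IsPosSemidefFun fun x => (NormedSpace.exp ((t : ℂ) • F x)) j k := by
  intro t ht j k
  have hterm : ∀ (y : Fin n → ℝ) (ℓ : ℕ),
      ((ℓ.factorial : ℂ)⁻¹ • ((t : ℂ) • F y) ^ ℓ) j k
        = ((((ℓ.factorial : ℝ))⁻¹ * t ^ ℓ : ℝ) : ℂ) * ((F y ^ ℓ) j k) := by
    intro y ℓ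
    rw [smul_pow]
    push_cast
    simp only [Matrix.smul_apply, smul_eq_mul]
    ring
  have hrepr : (fun x => (NormedSpace.exp ((t : ℂ) • F x)) j k)
      = fun y => ∑' ℓ : ℕ, ((((ℓ.factorial : ℝ))⁻¹ * t ^ ℓ : ℝ) : ℂ) * ((F y ^ ℓ) j k) := by
    funext y
    rw [(matrix_exp_entry ((t : ℂ) • F y) j k).1]
    exact tsum_congr (hterm y)
  rw [hrepr]
  refine isPosSemidefFun_tsum _ (fun ℓ => ?_) (fun y => ?_)
  · exact IsPosSemidefFun.real_smul
      (mul_nonneg (inv_nonneg.mpr (Nat.cast_nonneg _)) (pow_nonneg ht _))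
      (pow_entry_psd F hpsd ℓ j k)
  · exact ((matrix_exp_entry ((t : ℂ) • F y) j k).2).congr (hterm y)
end
end

section
/- Let n ∈ ℕ, n ≥ 1, let a : ℝⁿ → ℝ be continuous and bounded above, let b ≥ 0 be a constant, and define F₀ : ℝⁿ → ℂ^{2×2} by F₀(x) = [[a(x), b],[b, a(x)]]. If a is conditionally positive semidefinite, then for every t > 0 the matrix-valued function x ↦ exp(t F₀(x)) (matrix exponential) is positive semidefinite in the block sense: for all N ∈ ℕ, all x₁,…,x_N ∈ ℝⁿ, and all c₁,…,c_N ∈ ℂ², one has Σ_{p,q=1}^N ⟨c_p, exp(t F₀(x_p − x_q)) c_q⟩_{ℂ²} ≥ 0. -/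
open MeasureTheory Complex
open scoped ComplexOrder ENNReal

noncomputable section

/-- Schur product theorem, quadratic-form version. -/
lemma aux_schurQF {N : ℕ} (B C : Matrix (Fin N) (Fin N) ℂ) (hB : B.PosSemidef)
    (hC : ∀ d : Fin N → ℂ, 0 ≤ ∑ p, ∑ q, (starRingEnd ℂ) (d p) * C p q * d q)
    (c : Fin N → ℂ) :
    0 ≤ ∑ p, ∑ q, (starRingEnd ℂ) (c p) * (B p q * C p q) * c q := by
  obtain ⟨R, hR⟩ : ∃ R : Matrix (Fin N) (Fin N) ℂ, B = star R * R := by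
    open scoped MatrixOrder in
    exact CStarAlgebra.nonneg_iff_eq_star_mul_self.mp (Matrix.nonneg_iff_posSemidef.mpr hB)
  have h1 : ∀ p q, B p q = ∑ r, (starRingEnd ℂ) (R r p) * R r q := by
    intro p q
    rw [hR]
    simp [Matrix.mul_apply, Matrix.conjTranspose_apply, RCLike.star_def]
  have h2 : ∑ p, ∑ q, (starRingEnd ℂ) (c p) * (B p q * C p q) * c q
      = ∑ r, ∑ p, ∑ q, (starRingEnd ℂ) (R r p * c p) * C p q * (R r q * c q) := by
    have step1 : ∀ p q, (starRingEnd ℂ) (c p) * (B p q * C p q) * c q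
        = ∑ r, (starRingEnd ℂ) (R r p * c p) * C p q * (R r q * c q) := by
      intro p q
      rw [h1, Finset.sum_mul, Finset.mul_sum, Finset.sum_mul]
      refine Finset.sum_congr rfl fun r _ => ?_
      simp only [map_mul]
      ring
    calc ∑ p, ∑ q, (starRingEnd ℂ) (c p) * (B p q * C p q) * c q
        = ∑ p, ∑ q, ∑ r, (starRingEnd ℂ) (R r p * c p) * C p q * (R r q * c q) := by
          exact Finset.sum_congr rfl fun p _ => Finset.sum_congr rfl fun q _ => step1 p q
      _ = ∑ p, ∑ r, ∑ q, (starRingEnd ℂ) (R r p * c p) * C p q * (R r q * c q) := by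
          exact Finset.sum_congr rfl fun p _ => Finset.sum_comm
      _ = ∑ r, ∑ p, ∑ q, (starRingEnd ℂ) (R r p * c p) * C p q * (R r q * c q) :=
          Finset.sum_comm
  rw [h2]
  exact Finset.sum_nonneg fun r _ => hC fun p => R r p * c p

/-- Hadamard powers of a PSD matrix have nonnegative quadratic form. -/
lemma aux_hadpowQF {N : ℕ} (B : Matrix (Fin N) (Fin N) ℂ) (hB : B.PosSemidef) (k : ℕ)
    (c : Fin N → ℂ) :
    0 ≤ ∑ p, ∑ q, (starRingEnd ℂ) (c p) * (B p q) ^ k * c q := by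
  induction k generalizing c with
  | zero =>
    simp only [pow_zero, mul_one]
    have : ∑ p, ∑ q, (starRingEnd ℂ) (c p) * c q
        = star (∑ p, c p) * (∑ p, c p) := by
      rw [star_sum, Finset.sum_mul]
      refine Finset.sum_congr rfl fun p _ => ?_
      rw [Finset.mul_sum]
      rfl
    calc (0:ℂ) ≤ star (∑ p, c p) * (∑ p, c p) := star_mul_self_nonneg _
      _ = ∑ p, ∑ q, (starRingEnd ℂ) (c p) * c q := this.symm
  | succ k ih =>
    have := aux_schurQF B (Matrix.of fun p q => (B p q) ^ k) hB (fun d => ih d) c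
    simp only [Matrix.of_apply] at this
    calc (0:ℂ) ≤ ∑ p, ∑ q, (starRingEnd ℂ) (c p) * (B p q * (B p q) ^ k) * c q := this
      _ = ∑ p, ∑ q, (starRingEnd ℂ) (c p) * (B p q) ^ (k + 1) * c q := by
          refine Finset.sum_congr rfl fun p _ => Finset.sum_congr rfl fun q _ => ?_
          rw [← pow_succ']

/-- Entrywise exponential of a PSD matrix has nonnegative quadratic form. -/
lemma aux_expQF {N : ℕ} (B : Matrix (Fin N) (Fin N) ℂ) (hB : B.PosSemidef) (t : ℝ)
    (ht : 0 ≤ t) (c : Fin N → ℂ) :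
    0 ≤ ∑ p, ∑ q, (starRingEnd ℂ) (c p) * Complex.exp ((t : ℂ) * B p q) * c q := by
  have hexp : ∀ z : ℂ, Complex.exp z = ∑' m : ℕ, z ^ m / (m.factorial : ℂ) := by
    intro z
    rw [Complex.exp_eq_exp_ℂ, NormedSpace.exp_eq_tsum_div]
  have hsummable : ∀ p q : Fin N, Summable fun m : ℕ =>
      (starRingEnd ℂ) (c p) * (((t : ℂ) * B p q) ^ m / (m.factorial : ℂ)) * c q := by
    intro p q
    exact ((NormedSpace.expSeries_div_summable ((t : ℂ) * B p q)).mul_left _).mul_right _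
  have h1 : ∑ p, ∑ q, (starRingEnd ℂ) (c p) * Complex.exp ((t : ℂ) * B p q) * c q
      = ∑' m : ℕ, ∑ p, ∑ q,
          (starRingEnd ℂ) (c p) * (((t : ℂ) * B p q) ^ m / (m.factorial : ℂ)) * c q := by
    rw [Summable.tsum_finsetSum (fun p _ => summable_sum fun q _ => hsummable p q)]
    refine Finset.sum_congr rfl fun p _ => ?_
    rw [Summable.tsum_finsetSum (fun q _ => hsummable p q)]
    refine Finset.sum_congr rfl fun q _ => ?_
    rw [hexp, ← tsum_mul_left, ← tsum_mul_right]
  rw [h1]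
  refine tsum_nonneg fun m => ?_
  have h2 : ∑ p, ∑ q, (starRingEnd ℂ) (c p) * (((t : ℂ) * B p q) ^ m / (m.factorial : ℂ)) * c q
      = ((t : ℂ) ^ m / (m.factorial : ℂ)) *
          ∑ p, ∑ q, (starRingEnd ℂ) (c p) * (B p q) ^ m * c q := by
    rw [Finset.mul_sum]
    refine Finset.sum_congr rfl fun p _ => ?_
    rw [Finset.mul_sum]
    refine Finset.sum_congr rfl fun q _ => ?_
    rw [mul_pow]
    ring
  rw [h2]
  refine mul_nonneg ?_ (aux_hadpowQF B hB m c)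
  have : ((t : ℂ) ^ m / (m.factorial : ℂ)) = ((t ^ m / (m.factorial : ℝ) : ℝ) : ℂ) := by
    push_cast; ring
  rw [this]
  exact Complex.zero_le_real.mpr (by positivity)

/-- Schoenberg: conditionally PSD implies `exp (t a)` has nonnegative quadratic forms. -/
lemma aux_schoenberg {n : ℕ} (a : (Fin n → ℝ) → ℝ)
    (ha : IsCondPosSemidefFun fun x => (a x : ℂ)) (t : ℝ) (ht : 0 ≤ t)
    (N : ℕ) (x : Fin N → (Fin n → ℝ)) (d : Fin N → ℂ) :
    0 ≤ ∑ p, ∑ q, (starRingEnd ℂ) (d p) *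
        Complex.exp ((t : ℂ) * (a (x p - x q) : ℂ)) * d q := by
  -- symmetry of a
  have hsymm : ∀ y, a (-y) = a y := by
    intro y
    have h := (ha 2 ![y, 0]).1
    have h01 := congrFun (congrFun h 0) 1
    simp only [Matrix.conjTranspose_apply, Matrix.of_apply, Matrix.cons_val_zero,
      Matrix.cons_val_one, Matrix.head_cons, RCLike.star_def, Complex.conj_ofReal] at h01
    have : (a (0 - y) : ℂ) = (a (y - 0) : ℂ) := h01
    rw [zero_sub, sub_zero] at this
    exact_mod_cast this
  -- the matrix B
  set B : Matrix (Fin N) (Fin N) ℂ := Matrix.of fun p q =>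
    ((a (x p - x q) - a (x p) - a (x q) + a 0 : ℝ) : ℂ) with hBdef
  have hBapp : ∀ p q, B p q = ((a (x p - x q) - a (x p) - a (x q) + a 0 : ℝ) : ℂ) :=
    fun p q => rfl
  have hB : B.PosSemidef := by
    refine Matrix.posSemidef_iff_dotProduct_mulVec.mpr ⟨?_, ?_⟩
    · ext p q
      simp only [Matrix.conjTranspose_apply, hBapp, RCLike.star_def, Complex.conj_ofReal]
      have : a (x q - x p) = a (x p - x q) := by
        rw [← neg_sub (x p) (x q), hsymm]
      rw [this]
      ring_nf
    · intro cvec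
      set s : ℂ := ∑ p, cvec p with hs
      set y : Fin (N + 1) → (Fin n → ℝ) := Fin.cons 0 x with hy
      set e : Fin (N + 1) → ℂ := Fin.cons (-s) cvec with he
      have hesum : ∑ p, e p = 0 := by
        rw [he, Fin.sum_cons, ← hs, neg_add_cancel]
      have hQ := (ha (N + 1) y).2 e hesum
      have hEq : ∑ p, ∑ q, (starRingEnd ℂ) (e p) * ((a (y p - y q) : ℝ) : ℂ) * e q
          = ∑ p, ∑ q, (starRingEnd ℂ) (cvec p) * B p q * cvec q := by
        have hconjs : (starRingEnd ℂ) s = ∑ p, (starRingEnd ℂ) (cvec p) := by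
          rw [hs, map_sum]
        simp only [Fin.sum_univ_succ, he, hy, Fin.cons_zero, Fin.cons_succ, zero_sub, sub_zero,
          sub_self, hsymm, map_neg, hconjs, hBapp]
        push_cast
        simp only [Finset.sum_mul, Finset.mul_sum, neg_mul, mul_neg, Finset.sum_neg_distrib,
          mul_add, mul_sub, add_mul, sub_mul, Finset.sum_add_distrib, Finset.sum_sub_distrib, hs]
        rw [Finset.sum_comm (f := fun p q => (starRingEnd ℂ) (cvec p) * (a (x q) : ℂ) * cvec q)]
        ring_nf
        rw [Finset.sum_comm (γ := Fin N)]
        ring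
      have hdot : dotProduct (star cvec) (B.mulVec cvec)
          = ∑ p, ∑ q, (starRingEnd ℂ) (cvec p) * B p q * cvec q := by
        simp only [dotProduct, Matrix.mulVec, Pi.star_apply, RCLike.star_def,
          Finset.mul_sum, mul_assoc]
      rw [hdot, ← hEq]
      exact hQ
  -- now conclude via factorization exp(t a(x_p - x_q)) = g_p exp(t B_{pq}) g_q
  set gr : Fin N → ℝ := fun p => Real.exp (t * (a (x p) - a 0 / 2)) with hgr
  have key : ∀ p q, Complex.exp ((t : ℂ) * (a (x p - x q) : ℂ))
      = (gr p : ℂ) * Complex.exp ((t : ℂ) * B p q) * (gr q : ℂ) := by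
    intro p q
    have h1 : (gr p : ℂ) = Complex.exp ((t * (a (x p) - a 0 / 2) : ℝ) : ℂ) := by
      rw [hgr, ← Complex.ofReal_exp]
    have h2 : (gr q : ℂ) = Complex.exp ((t * (a (x q) - a 0 / 2) : ℝ) : ℂ) := by
      rw [hgr, ← Complex.ofReal_exp]
    rw [h1, h2, hBapp, ← Complex.exp_add, ← Complex.exp_add]
    congr 1
    push_cast
    ring
  have hEq2 : ∑ p, ∑ q, (starRingEnd ℂ) (d p) *
        Complex.exp ((t : ℂ) * (a (x p - x q) : ℂ)) * d q
      = ∑ p, ∑ q, (starRingEnd ℂ) ((gr p : ℂ) * d p) *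
          Complex.exp ((t : ℂ) * B p q) * ((gr q : ℂ) * d q) := by
    refine Finset.sum_congr rfl fun p _ => Finset.sum_congr rfl fun q _ => ?_
    rw [key p q, map_mul, Complex.conj_ofReal]
    ring
  rw [hEq2]
  exact aux_expQF B hB t ht fun p => (gr p : ℂ) * d p

lemma aux_exp_two_symm (α β : ℂ) :
    NormedSpace.exp (!![α, β; β, α]) =
      !![(Complex.exp (α + β) + Complex.exp (α - β)) / 2,
         (Complex.exp (α + β) - Complex.exp (α - β)) / 2;
         (Complex.exp (α + β) - Complex.exp (α - β)) / 2,
         (Complex.exp (α + β) + Complex.exp (α - β)) / 2] := by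
  have hU : (!![1, 1; 1, -1] : Matrix (Fin 2) (Fin 2) ℂ) * !![1/2, 1/2; 1/2, -(1/2)] = 1 := by
    ext i j
    fin_cases i <;> fin_cases j <;>
      simp [Matrix.mul_apply, Fin.sum_univ_two, Matrix.one_apply] <;> norm_num
  have hU' : (!![1/2, 1/2; 1/2, -(1/2)] : Matrix (Fin 2) (Fin 2) ℂ) * !![1, 1; 1, -1] = 1 := by
    ext i j
    fin_cases i <;> fin_cases j <;>
      simp [Matrix.mul_apply, Fin.sum_univ_two, Matrix.one_apply] <;> norm_num
  set U : (Matrix (Fin 2) (Fin 2) ℂ)ˣ := ⟨_, _, hU, hU'⟩ with hUdef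
  have hUval : (U : Matrix (Fin 2) (Fin 2) ℂ) = !![1, 1; 1, -1] := rfl
  have hUinv : ((U⁻¹ : (Matrix (Fin 2) (Fin 2) ℂ)ˣ) : Matrix (Fin 2) (Fin 2) ℂ)
      = !![1/2, 1/2; 1/2, -(1/2)] := rfl
  have hconj : !![α, β; β, α]
      = (U : Matrix (Fin 2) (Fin 2) ℂ) * Matrix.diagonal ![α + β, α - β] *
        ((U⁻¹ : (Matrix (Fin 2) (Fin 2) ℂ)ˣ) : Matrix (Fin 2) (Fin 2) ℂ) := by
    rw [hUval, hUinv]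
    ext i j
    fin_cases i <;> fin_cases j <;>
      simp [Matrix.mul_apply, Matrix.vecMul, dotProduct, Fin.sum_univ_two,
        Matrix.diagonal_apply] <;> ring
  rw [hconj, Matrix.exp_units_conj U, Matrix.exp_diagonal, hUval, hUinv]
  ext i j
  fin_cases i <;> fin_cases j <;>
    simp [Matrix.mul_apply, Matrix.vecMul, dotProduct, Fin.sum_univ_two,
      Matrix.diagonal_apply, ← Complex.exp_eq_exp_ℂ] <;> ring

theorem stmt14 {n : ℕ} (hn : 1 ≤ n)
    (a : (Fin n → ℝ) → ℝ) (ha_cont : Continuous a) (ha_bdd : ∃ c : ℝ, ∀ x, a x ≤ c)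
    (b : ℝ) (hb : 0 ≤ b)
    (F₀ : (Fin n → ℝ) → Matrix (Fin 2) (Fin 2) ℂ)
    (hF₀ : ∀ x, F₀ x = !![(a x : ℂ), (b : ℂ); (b : ℂ), (a x : ℂ)])
    (ha : IsCondPosSemidefFun fun x => (a x : ℂ)) :
    ∀ t : ℝ, 0 < t →
      ∀ (N : ℕ) (x : Fin N → (Fin n → ℝ)) (c : Fin N → Fin 2 → ℂ),
        0 ≤ ∑ p, ∑ q, dotProduct (star (c p))
          ((NormedSpace.exp ((t : ℂ) • F₀ (x p - x q))).mulVec (c q)) := by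
  intro t ht N x c
  set E : Fin N → Fin N → ℂ := fun p q => Complex.exp ((t : ℂ) * (a (x p - x q) : ℂ)) with hE
  set u : Fin N → ℂ := fun p => c p 0 + c p 1 with hu
  set v : Fin N → ℂ := fun p => c p 0 - c p 1 with hv
  have hcast1 : ((Real.exp (t * b) : ℝ) : ℂ) = Complex.exp ((t : ℂ) * (b : ℂ)) := by
    rw [Complex.ofReal_exp]; push_cast; ring_nf
  have hcast2 : ((Real.exp (-(t * b)) : ℝ) : ℂ) = Complex.exp (-((t : ℂ) * (b : ℂ))) := by
    rw [Complex.ofReal_exp]; push_cast; ring_nf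
  have hterm : ∀ p q, dotProduct (star (c p))
      ((NormedSpace.exp ((t : ℂ) • F₀ (x p - x q))).mulVec (c q))
      = ((Real.exp (t * b) / 2 : ℝ) : ℂ) * ((starRingEnd ℂ) (u p) * E p q * u q)
        + ((Real.exp (-(t * b)) / 2 : ℝ) : ℂ) * ((starRingEnd ℂ) (v p) * E p q * v q) := by
    intro p q
    rw [hF₀]
    have hsm : (t : ℂ) • (!![(a (x p - x q) : ℂ), (b : ℂ); (b : ℂ), (a (x p - x q) : ℂ)])
        = !![(t : ℂ) * (a (x p - x q) : ℂ), (t : ℂ) * (b : ℂ);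
             (t : ℂ) * (b : ℂ), (t : ℂ) * (a (x p - x q) : ℂ)] := by
      ext i j
      fin_cases i <;> fin_cases j <;> simp
    rw [hsm, aux_exp_two_symm]
    have e1 : Complex.exp ((t : ℂ) * (a (x p - x q) : ℂ) + (t : ℂ) * (b : ℂ))
        = E p q * ((Real.exp (t * b) : ℝ) : ℂ) := by
      rw [Complex.exp_add, hE, hcast1]
    have e2 : Complex.exp ((t : ℂ) * (a (x p - x q) : ℂ) - (t : ℂ) * (b : ℂ))
        = E p q * ((Real.exp (-(t * b)) : ℝ) : ℂ) := by
      rw [sub_eq_add_neg, Complex.exp_add, hE, hcast2]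
    rw [e1, e2]
    simp only [dotProduct, Matrix.mulVec, Fin.sum_univ_two, Pi.star_apply,
      RCLike.star_def, Matrix.of_apply, Matrix.cons_val', Matrix.cons_val_zero,
      Matrix.cons_val_one, Matrix.head_cons, Matrix.head_fin_const, Matrix.empty_val',
      Matrix.cons_val_fin_one, hu, hv]
    push_cast
    rw [map_add, map_sub]
    ring
  have hnn1 : (0 : ℂ) ≤ ((Real.exp (t * b) / 2 : ℝ) : ℂ) :=
    Complex.zero_le_real.mpr (by positivity)
  have hnn2 : (0 : ℂ) ≤ ((Real.exp (-(t * b)) / 2 : ℝ) : ℂ) :=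
    Complex.zero_le_real.mpr (by positivity)
  calc (0 : ℂ)
      ≤ ((Real.exp (t * b) / 2 : ℝ) : ℂ) *
            (∑ p, ∑ q, (starRingEnd ℂ) (u p) * E p q * u q)
        + ((Real.exp (-(t * b)) / 2 : ℝ) : ℂ) *
            (∑ p, ∑ q, (starRingEnd ℂ) (v p) * E p q * v q) :=
      add_nonneg (mul_nonneg hnn1 (aux_schoenberg a ha t ht.le N x u))
        (mul_nonneg hnn2 (aux_schoenberg a ha t ht.le N x v))
    _ = ∑ p, ∑ q, dotProduct (star (c p))
          ((NormedSpace.exp ((t : ℂ) • F₀ (x p - x q))).mulVec (c q)) := by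
      simp only [Finset.mul_sum]
      rw [← Finset.sum_add_distrib]
      refine Finset.sum_congr rfl fun p _ => ?_
      rw [← Finset.sum_add_distrib]
      exact Finset.sum_congr rfl fun q _ => (hterm p q).symm
end
end

section
/- Let n ∈ ℕ, n ≥ 1, let a : ℝⁿ → ℝ be continuous and bounded above, let b ≥ 0 be a constant, and define F₀ : ℝⁿ → ℂ^{2×2} by F₀(x) = [[a(x), b],[b, a(x)]]. Suppose that for every t > 0 the matrix-valued function x ↦ exp(t F₀(x)) (matrix exponential) is positive semidefinite in the block sense. Then F₀ is conditionally positive semidefinite in the sense of Mlak: for all N ∈ ℕ, all x₁,…,x_N ∈ ℝⁿ, and all c₁,…,c_N ∈ ℂ² with Σ_{p=1}^N c_p = 0, one has Σ_{p,q=1}^N ⟨c_p, F₀(x_p − x_q) c_q⟩_{ℂ²} ≥ 0. -/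
open MeasureTheory Complex
open scoped ComplexOrder ENNReal

open Filter
open scoped Topology

noncomputable section

lemma exp_fin_two_aux (α β : ℂ) :
    NormedSpace.exp (!![α, β; β, α]) =
      !![(Complex.exp (α+β) + Complex.exp (α-β))/2, (Complex.exp (α+β) - Complex.exp (α-β))/2;
         (Complex.exp (α+β) - Complex.exp (α-β))/2, (Complex.exp (α+β) + Complex.exp (α-β))/2] := by
  have hP : IsUnit (!![1, 1; 1, -1] : Matrix (Fin 2) (Fin 2) ℂ) := by
    rw [Matrix.isUnit_iff_isUnit_det, Matrix.det_fin_two_of]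
    norm_num
  have hPinv : (!![1, 1; 1, -1] : Matrix (Fin 2) (Fin 2) ℂ)⁻¹ = !![1/2, 1/2; 1/2, -(1/2)] := by
    apply Matrix.inv_eq_right_inv
    rw [Matrix.mul_fin_two, Matrix.one_fin_two]
    norm_num
  have hdiag : (Matrix.diagonal ![α+β, α-β] : Matrix (Fin 2) (Fin 2) ℂ) = !![α+β, 0; 0, α-β] := by
    ext i j
    fin_cases i <;> fin_cases j <;> simp [Matrix.diagonal]
  have key : (!![α, β; β, α] : Matrix (Fin 2) (Fin 2) ℂ)
      = !![1,1;1,-1] * Matrix.diagonal ![α+β, α-β] * (!![1,1;1,-1])⁻¹ := by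
    rw [hPinv, hdiag, Matrix.mul_fin_two, Matrix.mul_fin_two]
    ring_nf
  rw [key, Matrix.exp_conj _ _ hP, Matrix.exp_diagonal, hPinv]
  have hexpd : (NormedSpace.exp (![α+β, α-β]) : Fin 2 → ℂ)
      = ![Complex.exp (α+β), Complex.exp (α-β)] := by
    rw [Pi.exp_def]
    ext i
    fin_cases i <;> simp [← Complex.exp_eq_exp_ℂ]
  rw [hexpd]
  have hdiag2 : (Matrix.diagonal ![Complex.exp (α+β), Complex.exp (α-β)] : Matrix (Fin 2) (Fin 2) ℂ)
      = !![Complex.exp (α+β), 0; 0, Complex.exp (α-β)] := by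
    ext i j
    fin_cases i <;> fin_cases j <;> simp [Matrix.diagonal]
  rw [hdiag2, Matrix.mul_fin_two, Matrix.mul_fin_two]
  ring_nf

theorem stmt15 {n : ℕ} (hn : 1 ≤ n)
    (a : (Fin n → ℝ) → ℝ) (ha_cont : Continuous a) (ha_bdd : ∃ c : ℝ, ∀ x, a x ≤ c)
    (b : ℝ) (hb : 0 ≤ b)
    (F₀ : (Fin n → ℝ) → Matrix (Fin 2) (Fin 2) ℂ)
    (hF₀ : ∀ x, F₀ x = !![(a x : ℂ), (b : ℂ); (b : ℂ), (a x : ℂ)])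
    (hexp : ∀ t : ℝ, 0 < t →
      ∀ (N : ℕ) (x : Fin N → (Fin n → ℝ)) (c : Fin N → Fin 2 → ℂ),
        0 ≤ ∑ p, ∑ q, dotProduct (star (c p))
          ((NormedSpace.exp ((t : ℂ) • F₀ (x p - x q))).mulVec (c q))) :
    ∀ (N : ℕ) (x : Fin N → (Fin n → ℝ)) (c : Fin N → Fin 2 → ℂ),
      (∑ p, c p) = 0 →
      0 ≤ ∑ p, ∑ q,
        dotProduct (star (c p)) ((F₀ (x p - x q)).mulVec (c q)) := by
  intro N x c hc
  set A : Fin N → Fin N → ℝ := fun p q => a (x p - x q) with hA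
  set u : Fin N → ℂ := fun p => c p 0 + c p 1 with hu_def
  set v : Fin N → ℂ := fun p => c p 0 - c p 1 with hv_def
  have h0 : ∑ p, c p 0 = 0 := by have := congrFun hc 0; simpa using this
  have h1 : ∑ p, c p 1 = 0 := by have := congrFun hc 1; simpa using this
  have hu : ∑ p, u p = 0 := by simp [hu_def, Finset.sum_add_distrib, h0, h1]
  have hv : ∑ p, v p = 0 := by simp [hv_def, Finset.sum_sub_distrib, h0, h1]
  set g : ℝ → ℂ := fun t => ∑ p, ∑ q,
      (Complex.exp ((t : ℂ) * ((A p q : ℝ) + b : ℝ)) * ((starRingEnd ℂ) (u p) * u q) +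
       Complex.exp ((t : ℂ) * ((A p q : ℝ) - b : ℝ)) * ((starRingEnd ℂ) (v p) * v q)) / 2
    with hg_def
  have hterm : ∀ (t : ℝ) (p q : Fin N),
      dotProduct (star (c p))
        ((NormedSpace.exp ((t : ℂ) • F₀ (x p - x q))).mulVec (c q)) =
      (Complex.exp ((t : ℂ) * ((A p q : ℝ) + b : ℝ)) * ((starRingEnd ℂ) (u p) * u q) +
       Complex.exp ((t : ℂ) * ((A p q : ℝ) - b : ℝ)) * ((starRingEnd ℂ) (v p) * v q)) / 2 := by
    intro t p q
    have hsm : (t : ℂ) • F₀ (x p - x q)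
        = !![(t : ℂ) * (A p q : ℝ), (t : ℂ) * (b : ℝ);
             (t : ℂ) * (b : ℝ), (t : ℂ) * (A p q : ℝ)] := by
      rw [hF₀]
      ext i j
      fin_cases i <;> fin_cases j <;> simp [hA]
    rw [hsm, exp_fin_two_aux]
    simp only [dotProduct, Matrix.mulVec, Fin.sum_univ_two, Pi.star_apply,
      Matrix.cons_val', Matrix.cons_val_zero, Matrix.cons_val_one, Matrix.head_cons,
      Matrix.head_fin_const, Matrix.empty_val', Matrix.cons_val_fin_one, Matrix.of_apply,
      RCLike.star_def]
    have e1 : ((t : ℂ)) * (((A p q : ℝ) + b : ℝ) : ℂ)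
        = (t : ℂ) * (A p q : ℝ) + (t : ℂ) * (b : ℝ) := by push_cast; ring
    have e2 : ((t : ℂ)) * (((A p q : ℝ) - b : ℝ) : ℂ)
        = (t : ℂ) * (A p q : ℝ) - (t : ℂ) * (b : ℝ) := by push_cast; ring
    rw [e1, e2]
    simp only [hu_def, hv_def, map_add, map_sub]
    ring
  have hg_nonneg : ∀ t : ℝ, 0 < t → 0 ≤ g t := by
    intro t ht
    calc (0:ℂ) ≤ ∑ p, ∑ q, dotProduct (star (c p))
          ((NormedSpace.exp ((t : ℂ) • F₀ (x p - x q))).mulVec (c q)) := hexp t ht N x c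
      _ = g t := by
          rw [hg_def]
          exact Finset.sum_congr rfl fun p _ => Finset.sum_congr rfl fun q _ => hterm t p q
  have hg0 : g 0 = 0 := by
    have hU : ∑ p, ∑ q, (starRingEnd ℂ) (u p) * u q = 0 := by
      rw [← Finset.sum_mul_sum, ← map_sum, hu]
      simp
    have hV : ∑ p, ∑ q, (starRingEnd ℂ) (v p) * v q = 0 := by
      rw [← Finset.sum_mul_sum, ← map_sum, hv]
      simp
    rw [hg_def]
    simp only [Complex.ofReal_zero, zero_mul, Complex.exp_zero, one_mul]
    have : (∑ p, ∑ q, ((starRingEnd ℂ) (u p) * u q + (starRingEnd ℂ) (v p) * v q) / 2 : ℂ)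
        = ((∑ p, ∑ q, (starRingEnd ℂ) (u p) * u q)
            + ∑ p, ∑ q, (starRingEnd ℂ) (v p) * v q) / 2 := by
      simp only [← Finset.sum_div, ← Finset.sum_add_distrib]
    rw [this, hU, hV]
    norm_num
  set L : ℂ := ∑ p, ∑ q,
      ((((A p q : ℝ) + b : ℝ) : ℂ) * ((starRingEnd ℂ) (u p) * u q) +
       (((A p q : ℝ) - b : ℝ) : ℂ) * ((starRingEnd ℂ) (v p) * v q)) / 2 with hL_def
  have hderiv : HasDerivAt g L 0 := by
    rw [hg_def, hL_def]
    refine HasDerivAt.fun_sum fun p _ => HasDerivAt.fun_sum fun q _ => ?_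
    have hd : HasDerivAt (fun t : ℝ => ((t : ℂ))) 1 0 := by
      simpa using (hasDerivAt_id (0:ℝ)).ofReal_comp
    have h3 := ((hd.mul_const ((((A p q : ℝ) + b : ℝ)) : ℂ)).cexp).mul_const
      ((starRingEnd ℂ) (u p) * u q)
    have h4 := ((hd.mul_const ((((A p q : ℝ) - b : ℝ)) : ℂ)).cexp).mul_const
      ((starRingEnd ℂ) (v p) * v q)
    have h5 := (h3.add h4).div_const 2
    convert h5 using 1
    rfl
    rfl
    simp
  have hslope : Tendsto (slope g 0) (𝓝[≠] (0:ℝ)) (𝓝 L) :=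
    hasDerivAt_iff_tendsto_slope.mp hderiv
  have h2 : Tendsto (slope g 0) (𝓝[>] (0:ℝ)) (𝓝 L) :=
    hslope.mono_left (nhdsWithin_mono 0 fun t ht => ne_of_gt ht)
  have hev : ∀ᶠ t in 𝓝[>] (0:ℝ), 0 ≤ slope g 0 t := by
    filter_upwards [self_mem_nhdsWithin] with t ht
    have ht' : (0:ℝ) < t := ht
    rw [slope_def_module, hg0]
    simp only [sub_zero]
    exact smul_nonneg (le_of_lt (inv_pos.mpr ht')) (hg_nonneg t ht')
  have hre : 0 ≤ L.re := by
    have hcont := (Complex.continuous_re.tendsto L).comp h2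
    refine ge_of_tendsto hcont ?_
    filter_upwards [hev] with t ht
    simpa using (Complex.le_def.mp ht).1
  have him : L.im = 0 := by
    have h3 := (Complex.continuous_im.tendsto L).comp h2
    have h4 : Tendsto (fun t => (slope g 0 t).im) (𝓝[>] (0:ℝ)) (𝓝 0) := by
      refine tendsto_const_nhds.congr' ?_
      filter_upwards [hev] with t ht
      simpa using (Complex.le_def.mp ht).2
    exact tendsto_nhds_unique h3 h4
  have hTL : ∑ p, ∑ q, dotProduct (star (c p)) ((F₀ (x p - x q)).mulVec (c q)) = L := by
    rw [hL_def]
    refine Finset.sum_congr rfl fun p _ => Finset.sum_congr rfl fun q _ => ?_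
    rw [hF₀]
    simp only [dotProduct, Matrix.mulVec, Fin.sum_univ_two, Pi.star_apply,
      Matrix.cons_val', Matrix.cons_val_zero, Matrix.cons_val_one, Matrix.head_cons,
      Matrix.head_fin_const, Matrix.empty_val', Matrix.cons_val_fin_one, Matrix.of_apply,
      RCLike.star_def]
    push_cast
    simp only [hu_def, hv_def, map_add, map_sub]
    ring
  rw [hTL, Complex.le_def]
  exact ⟨by simpa using hre, by simpa using him.symm⟩
end
end
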